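/- Weighted triangle bound (Lemma 4.14). Fix a dimension d > 6 and constants 0 < c ≤ C₀, and let τ: ℤ^d → [0,1] satisfy τ(0) = 1, τ(−x) = τ(x), and c(1+|x|)^{2−d} ≤ τ(x) ≤ C₀(1+|x|)^{2−d} for all x ∈ ℤ^d ∖ {0}. Then there is a constant C, depending only on d, c, C₀, such that for all x, x' ∈ ℤ^d: ∑_{y ∈ ℤ^d} τ(x) τ(y) τ(y−x) τ(y−x') ≤ C τ(x) τ(x') (1 + min{|x|, |x−x'|})^{−(d−4)}. -/

import Mathlib

open scoped ENNReal

abbrev Vtx (d : ℕ) := Fin d → ℤ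

noncomputable def znorm {d : ℕ} (x : Vtx d) : ℝ :=
  Real.sqrt (∑ i, ((x i : ℝ)) ^ 2)

namespace WTB

variable {d : ℕ}

/-- sup norm as a natural number -/
def Mn (y : Vtx d) : ℕ := Finset.univ.sup fun i => (y i).natAbs

lemma natAbs_le_Mn (y : Vtx d) (i : Fin d) : (y i).natAbs ≤ Mn y :=
  Finset.le_sup (f := fun i => (y i).natAbs) (Finset.mem_univ i)

lemma Mn_le_iff {y : Vtx d} {n : ℕ} : Mn y ≤ n ↔ ∀ i, (y i).natAbs ≤ n := by
  simp [Mn]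

lemma Mn_neg (y : Vtx d) : Mn (-y) = Mn y := by
  simp [Mn]

lemma Mn_add_le (a b : Vtx d) : Mn (a + b) ≤ Mn a + Mn b := by
  apply Finset.sup_le
  intro i _
  calc (a i + b i).natAbs ≤ (a i).natAbs + (b i).natAbs := Int.natAbs_add_le _ _
    _ ≤ Mn a + Mn b := Nat.add_le_add (natAbs_le_Mn a i) (natAbs_le_Mn b i)

lemma Mn_sub_rev (a b : Vtx d) : Mn (a - b) = Mn (b - a) := by
  rw [← Mn_neg (a - b), neg_sub]

lemma Mn_tri (x y : Vtx d) : Mn x ≤ Mn y + Mn (y - x) := by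
  have h2 : Mn x ≤ Mn y + Mn (x - y) := by
    have := Mn_add_le y (x - y)
    simpa [add_sub_cancel] using this
  rwa [Mn_sub_rev x y] at h2

lemma znorm_nonneg (x : Vtx d) : 0 ≤ znorm x := Real.sqrt_nonneg _

lemma natAbs_cast_sq (k : ℤ) : ((k.natAbs : ℝ))^2 = (k : ℝ)^2 := by
  push_cast [Nat.cast_natAbs]; exact sq_abs _

lemma Mn_le_znorm (y : Vtx d) : (Mn y : ℝ) ≤ znorm y := by
  rcases Nat.eq_zero_or_pos (Mn y) with h | h
  · simp [h, znorm_nonneg]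
  · have hne : (Finset.univ : Finset (Fin d)).Nonempty := by
      by_contra hne
      rw [Finset.not_nonempty_iff_eq_empty] at hne
      simp [Mn, hne] at h
    obtain ⟨i, _, hi⟩ := Finset.exists_mem_eq_sup Finset.univ hne (fun i => (y i).natAbs)
    have h1 : ((y i : ℝ))^2 ≤ ∑ j, ((y j : ℝ))^2 :=
      Finset.single_le_sum (f := fun j => ((y j : ℝ))^2) (fun j _ => sq_nonneg _) (Finset.mem_univ i)
    have h2 : ((Mn y : ℝ))^2 ≤ ∑ j, ((y j : ℝ))^2 := by
      rw [show Mn y = (y i).natAbs from hi, natAbs_cast_sq]; exact h1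
    rw [znorm, show ((Mn y : ℝ)) = Real.sqrt ((Mn y : ℝ)^2) by
      rw [Real.sqrt_sq (by positivity)]]
    exact Real.sqrt_le_sqrt h2

lemma znorm_le_Mn (y : Vtx d) : znorm y ≤ Real.sqrt d * (Mn y : ℝ) := by
  have h1 : ∑ j, ((y j : ℝ))^2 ≤ ∑ _j : Fin d, ((Mn y : ℝ))^2 := by
    apply Finset.sum_le_sum
    intro j _
    rw [← natAbs_cast_sq]
    have := natAbs_le_Mn y j
    have : ((y j).natAbs : ℝ) ≤ (Mn y : ℝ) := by exact_mod_cast this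
    nlinarith [Nat.cast_nonneg (α := ℝ) (y j).natAbs]
  calc znorm y ≤ Real.sqrt (∑ _j : Fin d, ((Mn y : ℝ))^2) := Real.sqrt_le_sqrt h1
    _ = Real.sqrt (d * ((Mn y:ℝ))^2) := by rw [Finset.sum_const]; simp [nsmul_eq_mul]
    _ = Real.sqrt d * (Mn y : ℝ) := by
        rw [Real.sqrt_mul (by positivity), Real.sqrt_sq (by positivity)]

lemma Mn_eq_zero_iff {y : Vtx d} : Mn y = 0 ↔ y = 0 := by
  constructor
  · intro h
    funext i
    have := natAbs_le_Mn y i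
    rw [h, Nat.le_zero, Int.natAbs_eq_zero] at this
    exact this
  · intro h; simp [h, Mn]

/-- The `ℓ∞` ball of radius `n` in `ℤ^d` as a finset. -/
noncomputable def ball (d n : ℕ) : Finset (Vtx d) :=
  Fintype.piFinset (fun _ : Fin d => Finset.Icc (-(n : ℤ)) (n : ℤ))

lemma mem_ball {n : ℕ} {y : Vtx d} : y ∈ ball d n ↔ Mn y ≤ n := by
  simp only [ball, Fintype.mem_piFinset, Finset.mem_Icc, Mn_le_iff]
  constructor
  · intro h i
    rcases h i with ⟨h1, h2⟩
    omega
  · intro h i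
    have := h i
    omega

lemma card_ball (d n : ℕ) : (ball d n).card = (2 * n + 1) ^ d := by
  rw [ball, Fintype.card_piFinset]
  simp [Int.card_Icc]
  congr 1
  omega

lemma nat_pow_sub_le (a b n : ℕ) (h : b ≤ a) : a ^ n ≤ b ^ n + n * (a - b) * a ^ (n - 1) := by
  induction n with
  | zero => simp
  | succ n ih =>
    rcases Nat.eq_zero_or_pos n with h0 | h0
    · subst h0; simpa using by omega
    have hn1 : n - 1 + 1 = n := by omega
    rw [Nat.add_sub_cancel]
    calc a ^ (n + 1) = a * a ^ n := by ring
      _ ≤ a * (b ^ n + n * (a - b) * a ^ (n - 1)) := Nat.mul_le_mul_left a ih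
      _ = a * b ^ n + n * (a - b) * (a ^ (n-1) * a) := by ring
      _ = a * b ^ n + n * (a - b) * a ^ n := by rw [← pow_succ, hn1]
      _ = (b + (a-b)) * b ^ n + n * (a - b) * a ^ n := by
          congr 2
          omega
      _ = b ^ (n+1) + ((a-b) * b ^ n + n * (a - b) * a ^ n) := by ring
      _ ≤ b ^ (n+1) + ((a-b) * a ^ n + n * (a - b) * a ^ n) := by
          gcongr
      _ = b ^ (n+1) + (n+1) * (a - b) * a ^ n := by ring

/-- the shell of points with `Mn y = m`. -/
noncomputable def shell (d m : ℕ) : Finset (Vtx d) := (ball d m).filter (fun y => Mn y = m)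

lemma mem_shell {m : ℕ} {y : Vtx d} : y ∈ shell d m ↔ Mn y = m := by
  simp only [shell, Finset.mem_filter, mem_ball]
  constructor
  · exact fun h => h.2
  · intro h; exact ⟨le_of_eq h, h⟩

lemma ball_mono {n n' : ℕ} (h : n ≤ n') : ball d n ⊆ ball d n' := by
  intro y hy
  rw [mem_ball] at *
  omega

lemma card_shell_le (hd : 1 ≤ d) (m : ℕ) :
    (shell d m).card ≤ d * 2 ^ d * (m + 1) ^ (d - 1) := by
  rcases Nat.eq_zero_or_pos m with h0 | h0
  · subst h0
    have h1 : (shell d 0).card ≤ (ball d 0).card :=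
      Finset.card_le_card (Finset.filter_subset _ _)
    rw [card_ball] at h1
    simp only [Nat.mul_zero, Nat.zero_add, one_pow] at h1
    calc (shell d 0).card ≤ 1 := h1
      _ ≤ d * 2 ^ d * (0 + 1) ^ (d - 1) := by
          simp only [Nat.zero_add, one_pow, Nat.mul_one]
          exact Nat.one_le_iff_ne_zero.mpr (by positivity)
  · have hsub : shell d m ⊆ ball d m \ ball d (m - 1) := by
      intro y hy
      rw [mem_shell] at hy
      rw [Finset.mem_sdiff, mem_ball, mem_ball]
      omega
    have hbsub : ball d (m-1) ⊆ ball d m := ball_mono (by omega)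
    have hc : (shell d m).card ≤ (2*m+1)^d - (2*(m-1)+1)^d := by
      calc (shell d m).card ≤ (ball d m \ ball d (m-1)).card := Finset.card_le_card hsub
        _ = (ball d m).card - (ball d (m-1)).card := Finset.card_sdiff_of_subset hbsub
        _ = (2*m+1)^d - (2*(m-1)+1)^d := by rw [card_ball, card_ball]
    have hab : (2*(m-1)+1) ≤ 2*m+1 := by omega
    have hkey := nat_pow_sub_le (2*m+1) (2*(m-1)+1) d hab
    have hdiff : (2*m+1) - (2*(m-1)+1) = 2 := by omega
    rw [hdiff] at hkey
    have h2 : (2*m+1)^d - (2*(m-1)+1)^d ≤ d * 2 * (2*m+1)^(d-1) := by omega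
    have h3 : (2*m+1)^(d-1) ≤ 2^(d-1) * (m+1)^(d-1) := by
      rw [← Nat.mul_pow]
      exact Nat.pow_le_pow_left (by omega) _
    calc (shell d m).card ≤ (2*m+1)^d - (2*(m-1)+1)^d := hc
      _ ≤ d * 2 * (2*m+1)^(d-1) := h2
      _ ≤ d * 2 * (2^(d-1) * (m+1)^(d-1)) := by exact Nat.mul_le_mul_left _ h3
      _ = d * (2 * 2^(d-1)) * (m+1)^(d-1) := by ring
      _ = d * 2^d * (m+1)^(d-1) := by
          congr 2
          rw [← pow_succ']
          congr 1
          omega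

noncomputable instance shellFintype (m : ℕ) : Fintype {y : Vtx d // Mn y = m} :=
  Fintype.ofFinset (shell d m) (fun _ => mem_shell)

lemma tsum_comp_Mn_le (hd : 1 ≤ d) (g : ℕ → ℝ≥0∞) :
    ∑' y : Vtx d, g (Mn y) ≤
      ∑' m : ℕ, ((d * 2 ^ d * (m + 1) ^ (d - 1) : ℕ) : ℝ≥0∞) * g m := by
  have h1 : ∑' y : Vtx d, g (Mn y) =
      ∑' p : Σ m : ℕ, {y : Vtx d // Mn y = m}, g (Mn p.2.val) :=
    ((Equiv.sigmaFiberEquiv Mn).tsum_eq (fun y => g (Mn y))).symm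
  rw [h1, ENNReal.tsum_sigma']
  apply ENNReal.tsum_le_tsum
  intro m
  have h2 : ∀ y : {y : Vtx d // Mn y = m}, g (Mn y.val) = g m := by
    intro y; rw [y.property]
  calc ∑' y : {y : Vtx d // Mn y = m}, g (Mn y.val)
      = ∑' _y : {y : Vtx d // Mn y = m}, g m := by
        exact tsum_congr h2
    _ = (Fintype.card {y : Vtx d // Mn y = m} : ℝ≥0∞) * g m := by
        rw [tsum_fintype, Finset.sum_const, Finset.card_univ, nsmul_eq_mul]
    _ ≤ ((d * 2 ^ d * (m + 1) ^ (d - 1) : ℕ) : ℝ≥0∞) * g m := by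
        gcongr
        have hcard : Fintype.card {y : Vtx d // Mn y = m} = (shell d m).card :=
          Fintype.card_ofFinset _ _
        exact_mod_cast hcard ▸ (Nat.cast_le (α := ℝ≥0∞)).mpr (card_shell_le hd m)
lemma one_dim_ball (n : ℕ) :
    ∑' m : ℕ, (if m ≤ n then ((m : ℝ≥0∞) + 1) else 0) ≤ ((n : ℝ≥0∞) + 1) ^ 2 := by
  have h0 : ∀ m ∉ Finset.range (n+1), (if m ≤ n then ((m : ℝ≥0∞) + 1) else 0) = 0 := by
    intro m hm
    rw [Finset.mem_range] at hm
    rw [if_neg (by omega)]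
  rw [tsum_eq_sum h0]
  calc ∑ m ∈ Finset.range (n+1), (if m ≤ n then ((m : ℝ≥0∞) + 1) else 0)
      ≤ ∑ _m ∈ Finset.range (n+1), ((n : ℝ≥0∞) + 1) := by
        apply Finset.sum_le_sum
        intro m hm
        rw [Finset.mem_range] at hm
        rw [if_pos (by omega)]
        gcongr
        exact_mod_cast Nat.le_of_lt_succ hm
    _ = (n+1 : ℕ) * ((n : ℝ≥0∞) + 1) := by
        rw [Finset.sum_const, Finset.card_range, nsmul_eq_mul]
    _ = ((n : ℝ≥0∞) + 1) ^ 2 := by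
        push_cast
        ring

lemma real_tail_sq (k N : ℕ) :
    ∑ j ∈ Finset.range N, (((k : ℝ) + j + 1)⁻¹) ^ 2 ≤ 2 / ((k : ℝ) + 1) := by
  set f : ℕ → ℝ := fun j => ((k : ℝ) + j + 1)⁻¹ with hf
  have step : ∀ j : ℕ, (f j) ^ 2 ≤ 2 * (f j - f (j+1)) := by
    intro j
    have ha : (0:ℝ) < (k : ℝ) + j + 1 := by positivity
    have hb : (0:ℝ) < (k : ℝ) + (j+1 : ℕ) + 1 := by positivity
    simp only [hf]
    rw [inv_sub_inv (ne_of_gt ha) (ne_of_gt hb)]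
    have hnum : ((k:ℝ) + (j+1:ℕ) + 1) - ((k:ℝ) + j + 1) = 1 := by push_cast; ring
    rw [hnum, mul_one_div, inv_eq_one_div, div_pow, one_pow,
      div_le_div_iff₀ (by positivity) (by positivity)]
    push_cast
    nlinarith
  calc ∑ j ∈ Finset.range N, (f j) ^ 2
      ≤ ∑ j ∈ Finset.range N, 2 * (f j - f (j+1)) :=
        Finset.sum_le_sum (fun j _ => step j)
    _ = 2 * ∑ j ∈ Finset.range N, (f j - f (j+1)) := by rw [Finset.mul_sum]
    _ = 2 * (f 0 - f N) := by rw [Finset.sum_range_sub' f]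
    _ ≤ 2 * f 0 := by
        have h1 : 0 ≤ f N := by simp only [hf]; positivity
        nlinarith
    _ = 2 / ((k : ℝ) + 1) := by simp only [hf]; norm_num [div_eq_mul_inv]

lemma summable_shift_sq (k : ℕ) : Summable (fun j : ℕ => (((k : ℝ) + j + 1)⁻¹) ^ 2) := by
  have hbase : Summable (fun j : ℕ => 1 / ((j:ℝ)) ^ 2) :=
    Real.summable_one_div_nat_pow.mpr (by norm_num)
  have h2 := (summable_nat_add_iff (k+1)).mpr hbase
  apply Summable.congr h2
  intro j
  push_cast
  rw [one_div, ← inv_pow]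
  congr 2
  ring

lemma enn_inv_pow_eq (m t : ℕ) :
    (((m : ℝ≥0∞) + 1)⁻¹) ^ t = ENNReal.ofReal ((((m : ℝ) + 1)⁻¹) ^ t) := by
  have h1 : ((m : ℝ≥0∞) + 1) = ENNReal.ofReal ((m : ℝ) + 1) := by
    rw [ENNReal.ofReal_add (by positivity) (by norm_num), ENNReal.ofReal_natCast,
      ENNReal.ofReal_one]
  rw [h1, ← ENNReal.ofReal_inv_of_pos (x := (m:ℝ)+1) (by positivity),
    ← ENNReal.ofReal_pow (p := ((m:ℝ)+1)⁻¹) (by positivity)]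

lemma enn_tail_sq (k : ℕ) :
    ∑' m : ℕ, (if k ≤ m then (((m : ℝ≥0∞) + 1)⁻¹) ^ 2 else 0) ≤
      2 * (((k : ℝ≥0∞) + 1)⁻¹) := by
  set f : ℕ → ℝ≥0∞ := fun m => (if k ≤ m then (((m : ℝ≥0∞) + 1)⁻¹) ^ 2 else 0) with hfdef
  have hinj : Function.Injective (fun i : ℕ => i + k) := fun a b h => by simpa using h
  have hsupp : Function.support f ⊆ Set.range (fun i : ℕ => i + k) := by
    intro m hm
    simp only [Function.mem_support, hfdef] at hm
    by_cases hkm : k ≤ m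
    · exact ⟨m - k, by simp; omega⟩
    · rw [if_neg hkm] at hm; exact absurd rfl hm
  rw [← Function.Injective.tsum_eq hinj hsupp]
  have hval : ∀ i : ℕ, f (i + k) = ENNReal.ofReal ((((k:ℝ) + i + 1)⁻¹) ^ 2) := by
    intro i
    simp only [hfdef]
    rw [if_pos (by omega), enn_inv_pow_eq (i+k) 2]
    congr 2
    push_cast
    ring
  calc ∑' i : ℕ, f (i + k) = ∑' i : ℕ, ENNReal.ofReal ((((k:ℝ) + i + 1)⁻¹) ^ 2) :=
        tsum_congr hval
    _ = ENNReal.ofReal (∑' i : ℕ, (((k:ℝ) + i + 1)⁻¹) ^ 2) :=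
        (ENNReal.ofReal_tsum_of_nonneg (fun i => by positivity) (summable_shift_sq k)).symm
    _ ≤ ENNReal.ofReal (2 / ((k:ℝ) + 1)) := by
        apply ENNReal.ofReal_le_ofReal
        exact Summable.tsum_le_of_sum_range_le (summable_shift_sq k) (fun N => real_tail_sq k N)
    _ = 2 * (((k : ℝ≥0∞) + 1)⁻¹) := by
        rw [ENNReal.ofReal_div_of_pos (by positivity), div_eq_mul_inv]
        congr 1
        · norm_num
        · congr 1
          rw [ENNReal.ofReal_add (by positivity) (by norm_num), ENNReal.ofReal_natCast,
            ENNReal.ofReal_one]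

lemma pow_mul_inv_pow (x : ℝ≥0∞) (hx0 : x ≠ 0) (hxt : x ≠ ⊤) {a b : ℕ} (h : b ≤ a) :
    x ^ a * (x⁻¹) ^ b = x ^ (a - b) := by
  have h1 : x ^ a = x ^ (a - b) * x ^ b := by rw [← pow_add]; congr 1; omega
  rw [h1, ← ENNReal.inv_pow, mul_assoc,
    ENNReal.mul_inv_cancel (pow_ne_zero b hx0) (ENNReal.pow_ne_top hxt), mul_one]

lemma pow_mul_inv_pow' (x : ℝ≥0∞) (hx0 : x ≠ 0) (hxt : x ≠ ⊤) {a b : ℕ} (h : a ≤ b) :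
    x ^ a * (x⁻¹) ^ b = (x⁻¹) ^ (b - a) := by
  have h1 : (x⁻¹) ^ b = (x⁻¹) ^ a * (x⁻¹) ^ (b - a) := by rw [← pow_add]; congr 1; omega
  rw [h1, ← mul_assoc, ← mul_pow, ENNReal.mul_inv_cancel hx0 hxt, one_pow, one_mul]

lemma cast_succ_ne_zero (m : ℕ) : ((m : ℝ≥0∞) + 1) ≠ 0 := by simp
lemma cast_succ_ne_top (m : ℕ) : ((m : ℝ≥0∞) + 1) ≠ ⊤ := by
  simp [ENNReal.add_ne_top, ENNReal.natCast_ne_top]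

lemma q_le {n m : ℕ} (h : n + 1 ≤ 2 * (m + 1)) :
    ((m : ℝ≥0∞) + 1)⁻¹ ≤ 2 * ((n : ℝ≥0∞) + 1)⁻¹ := by
  have hc : ((n : ℝ≥0∞) + 1) ≤ 2 * ((m : ℝ≥0∞) + 1) := by
    have h2 : ((n : ℝ≥0∞)) + 1 = ((n + 1 : ℕ) : ℝ≥0∞) := by push_cast; ring
    have h3 : 2 * ((m : ℝ≥0∞) + 1) = ((2 * (m + 1) : ℕ) : ℝ≥0∞) := by push_cast; ring
    rw [h2, h3]
    exact_mod_cast h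
  have h2 : (2 * ((m : ℝ≥0∞) + 1))⁻¹ ≤ ((n : ℝ≥0∞) + 1)⁻¹ := ENNReal.inv_le_inv.mpr hc
  calc ((m : ℝ≥0∞) + 1)⁻¹ = 2 * (2 * ((m : ℝ≥0∞) + 1))⁻¹ := by
        rw [ENNReal.mul_inv (by norm_num) (by norm_num), ← mul_assoc,
          ENNReal.mul_inv_cancel (by norm_num) (by norm_num), one_mul]
    _ ≤ 2 * ((n : ℝ≥0∞) + 1)⁻¹ := by gcongr

lemma ball_sum (hd : 2 ≤ d) (n : ℕ) :
    ∑' y : Vtx d, (if Mn y ≤ n then (((Mn y : ℝ≥0∞) + 1)⁻¹) ^ (d - 2) else 0) ≤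
      ((d * 2 ^ d : ℕ) : ℝ≥0∞) * ((n : ℝ≥0∞) + 1) ^ 2 := by
  calc ∑' y : Vtx d, (if Mn y ≤ n then (((Mn y : ℝ≥0∞) + 1)⁻¹) ^ (d - 2) else 0)
      ≤ ∑' m : ℕ, ((d * 2 ^ d * (m + 1) ^ (d - 1) : ℕ) : ℝ≥0∞) *
          (if m ≤ n then (((m : ℝ≥0∞) + 1)⁻¹) ^ (d - 2) else 0) :=
        tsum_comp_Mn_le (by omega) _
    _ ≤ ∑' m : ℕ, ((d * 2 ^ d : ℕ) : ℝ≥0∞) * (if m ≤ n then ((m : ℝ≥0∞) + 1) else 0) := by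
        apply ENNReal.tsum_le_tsum
        intro m
        by_cases hm : m ≤ n
        · rw [if_pos hm, if_pos hm]
          have hc : ((d * 2 ^ d * (m + 1) ^ (d - 1) : ℕ) : ℝ≥0∞) =
              ((d * 2 ^ d : ℕ) : ℝ≥0∞) * ((m : ℝ≥0∞) + 1) ^ (d - 1) := by
            push_cast; ring
          rw [hc, mul_assoc]
          gcongr
          rw [pow_mul_inv_pow _ (cast_succ_ne_zero m) (cast_succ_ne_top m)
            (show d - 2 ≤ d - 1 by omega)]
          rw [show d - 1 - (d - 2) = 1 by omega, pow_one]
        · rw [if_neg hm, if_neg hm, mul_zero, mul_zero]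
    _ = ((d * 2 ^ d : ℕ) : ℝ≥0∞) * ∑' m : ℕ, (if m ≤ n then ((m : ℝ≥0∞) + 1) else 0) :=
        ENNReal.tsum_mul_left
    _ ≤ ((d * 2 ^ d : ℕ) : ℝ≥0∞) * (((n : ℝ≥0∞) + 1) ^ 2) := by
        gcongr
        exact one_dim_ball n

lemma tail_sum (hd : 6 < d) (n : ℕ) :
    ∑' y : Vtx d, (if n ≤ 2 * Mn y then (((Mn y : ℝ≥0∞) + 1)⁻¹) ^ (2 * d - 4) else 0) ≤
      ((d * 2 ^ d : ℕ) : ℝ≥0∞) * 2 ^ d * (((n : ℝ≥0∞) + 1)⁻¹) ^ (d - 4) := by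
  set k₀ : ℕ := (n + 1) / 2 with hk0
  calc ∑' y : Vtx d, (if n ≤ 2 * Mn y then (((Mn y : ℝ≥0∞) + 1)⁻¹) ^ (2 * d - 4) else 0)
      ≤ ∑' m : ℕ, ((d * 2 ^ d * (m + 1) ^ (d - 1) : ℕ) : ℝ≥0∞) *
          (if n ≤ 2 * m then (((m : ℝ≥0∞) + 1)⁻¹) ^ (2 * d - 4) else 0) :=
        tsum_comp_Mn_le (by omega) _
    _ ≤ ∑' m : ℕ, (((d * 2 ^ d : ℕ) : ℝ≥0∞) * (2 ^ (d - 5) * (((n : ℝ≥0∞) + 1)⁻¹) ^ (d - 5))) *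
          (if k₀ ≤ m then (((m : ℝ≥0∞) + 1)⁻¹) ^ 2 else 0) := by
        apply ENNReal.tsum_le_tsum
        intro m
        by_cases hm : n ≤ 2 * m
        · rw [if_pos hm, if_pos (show k₀ ≤ m by omega)]
          have hc : ((d * 2 ^ d * (m + 1) ^ (d - 1) : ℕ) : ℝ≥0∞) =
              ((d * 2 ^ d : ℕ) : ℝ≥0∞) * ((m : ℝ≥0∞) + 1) ^ (d - 1) := by
            push_cast; ring
          have hterm : ((m : ℝ≥0∞) + 1) ^ (d - 1) * (((m : ℝ≥0∞) + 1)⁻¹) ^ (2 * d - 4) ≤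
              (2 ^ (d - 5) * (((n : ℝ≥0∞) + 1)⁻¹) ^ (d - 5)) * (((m : ℝ≥0∞) + 1)⁻¹) ^ 2 := by
            rw [pow_mul_inv_pow' _ (cast_succ_ne_zero m) (cast_succ_ne_top m)
              (show d - 1 ≤ 2 * d - 4 by omega)]
            rw [show (2 * d - 4) - (d - 1) = (d - 5) + 2 by omega, pow_add]
            gcongr
            calc (((m : ℝ≥0∞) + 1)⁻¹) ^ (d - 5) ≤ (2 * ((n : ℝ≥0∞) + 1)⁻¹) ^ (d - 5) := by
                  gcongr
                  exact q_le (by omega)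
              _ = 2 ^ (d - 5) * (((n : ℝ≥0∞) + 1)⁻¹) ^ (d - 5) := mul_pow _ _ _
          rw [hc]
          calc ((d * 2 ^ d : ℕ) : ℝ≥0∞) * ((m : ℝ≥0∞) + 1) ^ (d - 1) *
                (((m : ℝ≥0∞) + 1)⁻¹) ^ (2 * d - 4)
              = ((d * 2 ^ d : ℕ) : ℝ≥0∞) *
                (((m : ℝ≥0∞) + 1) ^ (d - 1) * (((m : ℝ≥0∞) + 1)⁻¹) ^ (2 * d - 4)) := by ring
            _ ≤ ((d * 2 ^ d : ℕ) : ℝ≥0∞) *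
                ((2 ^ (d - 5) * (((n : ℝ≥0∞) + 1)⁻¹) ^ (d - 5)) * (((m : ℝ≥0∞) + 1)⁻¹) ^ 2) := by
                gcongr
            _ = ((d * 2 ^ d : ℕ) : ℝ≥0∞) * (2 ^ (d - 5) * (((n : ℝ≥0∞) + 1)⁻¹) ^ (d - 5)) *
                (((m : ℝ≥0∞) + 1)⁻¹) ^ 2 := by ring
        · rw [if_neg hm, mul_zero]
          exact zero_le
    _ = (((d * 2 ^ d : ℕ) : ℝ≥0∞) * (2 ^ (d - 5) * (((n : ℝ≥0∞) + 1)⁻¹) ^ (d - 5))) *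
          ∑' m : ℕ, (if k₀ ≤ m then (((m : ℝ≥0∞) + 1)⁻¹) ^ 2 else 0) :=
        ENNReal.tsum_mul_left
    _ ≤ (((d * 2 ^ d : ℕ) : ℝ≥0∞) * (2 ^ (d - 5) * (((n : ℝ≥0∞) + 1)⁻¹) ^ (d - 5))) *
          (2 * (((k₀ : ℝ≥0∞) + 1)⁻¹)) := by
        gcongr
        exact enn_tail_sq k₀
    _ ≤ (((d * 2 ^ d : ℕ) : ℝ≥0∞) * (2 ^ (d - 5) * (((n : ℝ≥0∞) + 1)⁻¹) ^ (d - 5))) *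
          (2 * (2 * ((n : ℝ≥0∞) + 1)⁻¹)) := by
        gcongr
        exact q_le (by omega)
    _ ≤ ((d * 2 ^ d : ℕ) : ℝ≥0∞) * 2 ^ d * (((n : ℝ≥0∞) + 1)⁻¹) ^ (d - 4) := by
        have hpow : (((n : ℝ≥0∞) + 1)⁻¹) ^ (d - 5) * ((n : ℝ≥0∞) + 1)⁻¹ =
            (((n : ℝ≥0∞) + 1)⁻¹) ^ (d - 4) := by
          rw [← pow_succ]
          congr 1
          omega
        calc ((d * 2 ^ d : ℕ) : ℝ≥0∞) * (2 ^ (d - 5) * (((n : ℝ≥0∞) + 1)⁻¹) ^ (d - 5)) *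
              (2 * (2 * ((n : ℝ≥0∞) + 1)⁻¹))
            = ((d * 2 ^ d : ℕ) : ℝ≥0∞) * (2 ^ (d - 5) * 4) *
              ((((n : ℝ≥0∞) + 1)⁻¹) ^ (d - 5) * ((n : ℝ≥0∞) + 1)⁻¹) := by ring
          _ = ((d * 2 ^ d : ℕ) : ℝ≥0∞) * (2 ^ (d - 5) * 4) *
              (((n : ℝ≥0∞) + 1)⁻¹) ^ (d - 4) := by rw [hpow]
          _ ≤ ((d * 2 ^ d : ℕ) : ℝ≥0∞) * 2 ^ d * (((n : ℝ≥0∞) + 1)⁻¹) ^ (d - 4) := by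
              gcongr
              calc (2 : ℝ≥0∞) ^ (d - 5) * 4 = 2 ^ (d - 5) * 2 ^ 2 := by norm_num
                _ = 2 ^ ((d - 5) + 2) := (pow_add 2 (d-5) 2).symm
                _ ≤ 2 ^ d := by
                    apply pow_le_pow_right₀ (by norm_num)
                    omega

lemma q_anti {i j : ℕ} (h : i ≤ j) : ((j : ℝ≥0∞) + 1)⁻¹ ≤ ((i : ℝ≥0∞) + 1)⁻¹ :=
  ENNReal.inv_le_inv.mpr (add_le_add (Nat.cast_le.mpr h) le_rfl)

lemma indicator_tsum_mono {α : Type*} [Countable α] (f : α → ℝ≥0∞) (P Q : α → Prop)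
    [DecidablePred P] [DecidablePred Q] (hPQ : ∀ a, P a → Q a) :
    ∑' a, (if P a then f a else 0) ≤ ∑' a, (if Q a then f a else 0) := by
  apply ENNReal.tsum_le_tsum
  intro a
  by_cases hP : P a
  · rw [if_pos hP, if_pos (hPQ a hP)]
  · rw [if_neg hP]; exact zero_le

lemma sub_reindex (z : Vtx d) (g : Vtx d → ℝ≥0∞) : ∑' y : Vtx d, g (y - z) = ∑' u, g u :=
  (Equiv.subRight z).tsum_eq g

lemma core_sum (hd : 6 < d) (z : Vtx d) :
    ∑' y : Vtx d, ((((Mn y : ℝ≥0∞) + 1)⁻¹) ^ (d - 2) *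
        (((Mn (y - z) : ℝ≥0∞) + 1)⁻¹) ^ (d - 2)) ≤
      ((d * 2 ^ d * 2 ^ (d + 2) : ℕ) : ℝ≥0∞) * (((Mn z : ℝ≥0∞) + 1)⁻¹) ^ (d - 4) := by
  classical
  set a : ℕ := Mn z with ha
  set X : ℝ≥0∞ := (a : ℝ≥0∞) + 1 with hX
  set K : ℝ≥0∞ := 2 ^ (d - 2) * (X⁻¹) ^ (d - 2) with hK
  set w : Vtx d → ℝ≥0∞ := fun y => (((Mn y : ℝ≥0∞) + 1)⁻¹) ^ (d - 2) with hw
  set f1 : Vtx d → ℝ≥0∞ := fun y => if 2 * Mn y ≤ a then K * w y else 0 with hf1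
  set f2 : Vtx d → ℝ≥0∞ := fun y => if 2 * Mn (y - z) ≤ a then K * w (y - z) else 0 with hf2
  set f3 : Vtx d → ℝ≥0∞ := fun y =>
    if a + 1 ≤ 2 * Mn y ∧ Mn y ≤ Mn (y - z) then (((Mn y : ℝ≥0∞) + 1)⁻¹) ^ (2 * d - 4) else 0
    with hf3
  set f4 : Vtx d → ℝ≥0∞ := fun y =>
    if a + 1 ≤ 2 * Mn (y - z) ∧ Mn (y - z) < Mn y then
      (((Mn (y - z) : ℝ≥0∞) + 1)⁻¹) ^ (2 * d - 4) else 0 with hf4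
  have htri : ∀ y : Vtx d, a ≤ Mn y + Mn (y - z) := fun y => Mn_tri z y
  -- pointwise bound
  have hpt : ∀ y : Vtx d, w y * w (y - z) ≤ f1 y + f2 y + f3 y + f4 y := by
    intro y
    by_cases h1 : 2 * Mn y ≤ a
    · have hq : ((Mn (y - z) : ℝ≥0∞) + 1)⁻¹ ≤ 2 * X⁻¹ := q_le (by have := htri y; omega)
      have hb : w (y - z) ≤ 2 ^ (d - 2) * (X⁻¹) ^ (d - 2) := by
        calc w (y - z) = (((Mn (y - z) : ℝ≥0∞) + 1)⁻¹) ^ (d - 2) := rfl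
          _ ≤ (2 * X⁻¹) ^ (d - 2) := by gcongr
          _ = 2 ^ (d - 2) * (X⁻¹) ^ (d - 2) := mul_pow _ _ _
      have hthis : w y * w (y - z) ≤ f1 y := by
        simp only [hf1, if_pos h1, hK]
        rw [mul_comm (w y)]
        exact mul_le_mul_left hb (w y)
      exact hthis.trans (le_self_add.trans (le_self_add.trans le_self_add))
    · by_cases h2 : 2 * Mn (y - z) ≤ a
      · have hq : ((Mn y : ℝ≥0∞) + 1)⁻¹ ≤ 2 * X⁻¹ := q_le (by have := htri y; omega)
        have hb : w y ≤ 2 ^ (d - 2) * (X⁻¹) ^ (d - 2) := by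
          calc w y = (((Mn y : ℝ≥0∞) + 1)⁻¹) ^ (d - 2) := rfl
            _ ≤ (2 * X⁻¹) ^ (d - 2) := by gcongr
            _ = 2 ^ (d - 2) * (X⁻¹) ^ (d - 2) := mul_pow _ _ _
        have hthis : w y * w (y - z) ≤ f2 y := by
          simp only [hf2, if_pos h2, hK]
          exact mul_le_mul_left hb (w (y - z))
        exact hthis.trans ((le_add_self.trans le_self_add).trans le_self_add)
      · by_cases h3 : Mn y ≤ Mn (y - z)
        · have hcond : a + 1 ≤ 2 * Mn y ∧ Mn y ≤ Mn (y - z) := ⟨by omega, h3⟩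
          have hthis : w y * w (y - z) ≤ f3 y := by
            simp only [hf3, if_pos hcond]
            calc w y * w (y - z) ≤ w y * w y := by
                  apply mul_le_mul_right
                  exact pow_le_pow_left' (q_anti (i := Mn y) (j := Mn (y - z)) h3) _
              _ = (((Mn y : ℝ≥0∞) + 1)⁻¹) ^ ((d - 2) + (d - 2)) := (pow_add _ _ _).symm
              _ = (((Mn y : ℝ≥0∞) + 1)⁻¹) ^ (2 * d - 4) := by congr 1; omega
          exact hthis.trans (le_add_self.trans le_self_add)
        · have hcond : a + 1 ≤ 2 * Mn (y - z) ∧ Mn (y - z) < Mn y := ⟨by omega, by omega⟩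
          have hthis : w y * w (y - z) ≤ f4 y := by
            simp only [hf4, if_pos hcond]
            calc w y * w (y - z) ≤ w (y - z) * w (y - z) := by
                  apply mul_le_mul_left
                  exact pow_le_pow_left'
                    (q_anti (i := Mn (y - z)) (j := Mn y) (by omega)) _
              _ = (((Mn (y - z) : ℝ≥0∞) + 1)⁻¹) ^ ((d - 2) + (d - 2)) := (pow_add _ _ _).symm
              _ = (((Mn (y - z) : ℝ≥0∞) + 1)⁻¹) ^ (2 * d - 4) := by congr 1; omega
          exact hthis.trans le_add_self
  have hXz : X ≠ 0 := cast_succ_ne_zero a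
  have hXt : X ≠ ⊤ := cast_succ_ne_top a
  -- sum of f1-type term
  have hsum1 : ∀ g : Vtx d → ℝ≥0∞,
      (∀ y, g y = if 2 * Mn y ≤ a then K * w y else 0) →
      ∑' y, g y ≤ ((d * 2 ^ d : ℕ) : ℝ≥0∞) * 2 ^ (d - 2) * (X⁻¹) ^ (d - 4) := by
    intro g hg
    have step1 : ∑' y, g y = K * ∑' y, (if 2 * Mn y ≤ a then w y else 0) := by
      rw [← ENNReal.tsum_mul_left]
      apply tsum_congr
      intro y
      rw [hg y, mul_ite, mul_zero]
    rw [step1]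
    have step2 : ∑' y : Vtx d, (if 2 * Mn y ≤ a then w y else 0) ≤
        ((d * 2 ^ d : ℕ) : ℝ≥0∞) * X ^ 2 := by
      calc ∑' y : Vtx d, (if 2 * Mn y ≤ a then w y else 0)
          ≤ ∑' y : Vtx d, (if Mn y ≤ a then w y else 0) :=
            indicator_tsum_mono _ _ _ (fun y hy => by omega)
        _ ≤ ((d * 2 ^ d : ℕ) : ℝ≥0∞) * X ^ 2 := ball_sum (by omega) a
    calc K * ∑' y : Vtx d, (if 2 * Mn y ≤ a then w y else 0)
        ≤ K * (((d * 2 ^ d : ℕ) : ℝ≥0∞) * X ^ 2) := by gcongr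
      _ = ((d * 2 ^ d : ℕ) : ℝ≥0∞) * 2 ^ (d - 2) * (X ^ 2 * (X⁻¹) ^ (d - 2)) := by
          rw [hK]; ring
      _ = ((d * 2 ^ d : ℕ) : ℝ≥0∞) * 2 ^ (d - 2) * (X⁻¹) ^ (d - 4) := by
          rw [pow_mul_inv_pow' X hXz hXt (show 2 ≤ d - 2 by omega),
            show d - 2 - 2 = d - 4 by omega]
  -- sum of f3-type term
  have hsum3 : ∀ (P : Vtx d → Prop) [DecidablePred P], (∀ y, P y → a ≤ 2 * Mn y) →
      ∑' y : Vtx d, (if P y then (((Mn y : ℝ≥0∞) + 1)⁻¹) ^ (2 * d - 4) else 0) ≤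
        ((d * 2 ^ d : ℕ) : ℝ≥0∞) * 2 ^ d * (X⁻¹) ^ (d - 4) := by
    intro P _ hP
    calc ∑' y : Vtx d, (if P y then (((Mn y : ℝ≥0∞) + 1)⁻¹) ^ (2 * d - 4) else 0)
        ≤ ∑' y : Vtx d, (if a ≤ 2 * Mn y then (((Mn y : ℝ≥0∞) + 1)⁻¹) ^ (2 * d - 4) else 0) :=
          indicator_tsum_mono _ _ _ hP
      _ ≤ ((d * 2 ^ d : ℕ) : ℝ≥0∞) * 2 ^ d * (X⁻¹) ^ (d - 4) := tail_sum hd a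
  calc ∑' y : Vtx d, (w y * w (y - z)) ≤ ∑' y : Vtx d, (f1 y + f2 y + f3 y + f4 y) :=
        ENNReal.tsum_le_tsum hpt
    _ = (∑' y, f1 y) + (∑' y, f2 y) + (∑' y, f3 y) + (∑' y, f4 y) := by
        rw [ENNReal.tsum_add, ENNReal.tsum_add, ENNReal.tsum_add]
    _ ≤ (((d * 2 ^ d : ℕ) : ℝ≥0∞) * 2 ^ (d - 2) * (X⁻¹) ^ (d - 4)) +
        (((d * 2 ^ d : ℕ) : ℝ≥0∞) * 2 ^ (d - 2) * (X⁻¹) ^ (d - 4)) +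
        (((d * 2 ^ d : ℕ) : ℝ≥0∞) * 2 ^ d * (X⁻¹) ^ (d - 4)) +
        (((d * 2 ^ d : ℕ) : ℝ≥0∞) * 2 ^ d * (X⁻¹) ^ (d - 4)) := by
        gcongr
        · exact hsum1 f1 (fun y => rfl)
        · have hre : ∑' y, f2 y = ∑' u : Vtx d,
              (if 2 * Mn u ≤ a then K * w u else 0) := by
            rw [hf2]
            exact sub_reindex z (fun u => if 2 * Mn u ≤ a then K * w u else 0)
          rw [hre]
          exact hsum1 _ (fun y => rfl)
        · exact hsum3 _ (fun y hy => by have := hy.1; omega)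
        · have hre : ∑' y, f4 y = ∑' u : Vtx d,
              (if a + 1 ≤ 2 * Mn u ∧ Mn u < Mn (u + z) then
                (((Mn u : ℝ≥0∞) + 1)⁻¹) ^ (2 * d - 4) else 0) := by
            rw [hf4]
            have := sub_reindex z (fun u => if a + 1 ≤ 2 * Mn u ∧ Mn u < Mn (u + z) then
                (((Mn u : ℝ≥0∞) + 1)⁻¹) ^ (2 * d - 4) else 0)
            rw [← this]
            apply tsum_congr
            intro y
            congr 2
            simp [sub_add_cancel]
          rw [hre]
          exact hsum3 _ (fun y hy => by have := hy.1; omega)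
    _ ≤ ((d * 2 ^ d * 2 ^ (d + 2) : ℕ) : ℝ≥0∞) * (X⁻¹) ^ (d - 4) := by
        have hcast : ((d * 2 ^ d * 2 ^ (d + 2) : ℕ) : ℝ≥0∞) =
            ((d * 2 ^ d : ℕ) : ℝ≥0∞) * 2 ^ (d + 2) := by push_cast; ring
        rw [hcast]
        have h2le : (2 : ℝ≥0∞) ^ (d - 2) ≤ 2 ^ d := pow_le_pow_right₀ (by norm_num) (by omega)
        calc (((d * 2 ^ d : ℕ) : ℝ≥0∞) * 2 ^ (d - 2) * (X⁻¹) ^ (d - 4)) +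
            (((d * 2 ^ d : ℕ) : ℝ≥0∞) * 2 ^ (d - 2) * (X⁻¹) ^ (d - 4)) +
            (((d * 2 ^ d : ℕ) : ℝ≥0∞) * 2 ^ d * (X⁻¹) ^ (d - 4)) +
            (((d * 2 ^ d : ℕ) : ℝ≥0∞) * 2 ^ d * (X⁻¹) ^ (d - 4))
            ≤ (((d * 2 ^ d : ℕ) : ℝ≥0∞) * 2 ^ d * (X⁻¹) ^ (d - 4)) +
            (((d * 2 ^ d : ℕ) : ℝ≥0∞) * 2 ^ d * (X⁻¹) ^ (d - 4)) +
            (((d * 2 ^ d : ℕ) : ℝ≥0∞) * 2 ^ d * (X⁻¹) ^ (d - 4)) +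
            (((d * 2 ^ d : ℕ) : ℝ≥0∞) * 2 ^ d * (X⁻¹) ^ (d - 4)) := by gcongr
          _ = ((d * 2 ^ d : ℕ) : ℝ≥0∞) * (4 * 2 ^ d) * (X⁻¹) ^ (d - 4) := by ring
          _ = ((d * 2 ^ d : ℕ) : ℝ≥0∞) * 2 ^ (d + 2) * (X⁻¹) ^ (d - 4) := by
              congr 2
              rw [pow_add]
              ring

end WTB

open WTB

set_option maxHeartbeats 2000000 in
/-- **Weighted triangle bound** (Lemma 4.14).
If `d > 6` and `τ : ℤ^d → [0,1]` satisfies `τ(0) = 1`, `τ(−x) = τ(x)` and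
two-sided bounds `c(1+|x|)^{2−d} ≤ τ(x) ≤ C₀(1+|x|)^{2−d}` for `x ≠ 0`, then there
is a constant `C = C(d, c, C₀)` with
`∑_y τ(x) τ(y) τ(y−x) τ(y−x') ≤ C τ(x) τ(x') (1 + min(|x|, |x−x'|))^{−(d−4)}`. -/
theorem weighted_triangle_bound
    (d : ℕ) (hd : 6 < d) (c C₀ : ℝ) (hc : 0 < c) (hcC : c ≤ C₀) :
    ∃ C : ℝ, 0 < C ∧
      ∀ τ : Vtx d → ℝ,
        (∀ x, 0 ≤ τ x ∧ τ x ≤ 1) →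
        τ 0 = 1 →
        (∀ x, τ (-x) = τ x) →
        (∀ x : Vtx d, x ≠ 0 →
          c * (1 + znorm x) ^ (2 - (d : ℝ)) ≤ τ x ∧
          τ x ≤ C₀ * (1 + znorm x) ^ (2 - (d : ℝ))) →
        ∀ x x' : Vtx d,
          (∑' y : Vtx d, ENNReal.ofReal (τ x * τ y * τ (y - x) * τ (y - x'))) ≤
            ENNReal.ofReal
              (C * τ x * τ x' *
                (1 + min (znorm x) (znorm (x - x'))) ^ (-((d : ℝ) - 4))) := by
  classical
  set s : ℝ := Real.sqrt d with hs
  have hs1 : 1 ≤ s := by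
    rw [hs, show (1:ℝ) = Real.sqrt 1 by simp]
    exact Real.sqrt_le_sqrt (by exact_mod_cast Nat.one_le_iff_ne_zero.mpr (by omega))
  have hs0 : 0 < s := lt_of_lt_of_le one_pos hs1
  set CU : ℝ := max C₀ 1 with hCU
  have hCU1 : 1 ≤ CU := le_max_right _ _
  have hCU0 : 0 < CU := lt_of_lt_of_le one_pos hCU1
  have hC₀CU : C₀ ≤ CU := le_max_left _ _
  set cm : ℝ := min c 1 with hcm
  have hcm0 : 0 < cm := lt_min hc one_pos
  have hcm1 : cm ≤ 1 := min_le_right _ _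
  have hcmc : cm ≤ c := min_le_left _ _
  set Kcr : ℝ := ((d * 2 ^ d * 2 ^ (d + 2) : ℕ) : ℝ) with hKcr
  have hKcr0 : 0 < Kcr := by
    rw [hKcr]
    have h : 0 < d * 2 ^ d * 2 ^ (d + 2) := by positivity
    exact_mod_cast h
  have hsdc : 0 < s ^ (d - 2) / cm := div_pos (pow_pos hs0 _) hcm0
  set DAr : ℝ := CU * 2 ^ (d - 2) * (s ^ (d - 2) / cm) with hDAr
  have hDAr0 : 0 < DAr :=
    mul_pos (mul_pos hCU0 (pow_pos two_pos _)) hsdc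
  set Er : ℝ := 2 * DAr * CU ^ 2 * Kcr with hEr
  have hEr0 : 0 < Er :=
    mul_pos (mul_pos (mul_pos two_pos hDAr0) (pow_pos hCU0 2)) hKcr0
  refine ⟨Er * s ^ (d - 4), mul_pos hEr0 (pow_pos hs0 _), ?_⟩
  intro τ hτ01 hτzero hτneg hτbnd x x'
  have h0 : ∀ v : Vtx d, 0 ≤ τ v := fun v => (hτ01 v).1
  set T : Vtx d → ℝ≥0∞ := fun v => ENNReal.ofReal (τ v) with hT
  -- rpow to nat-pow conversion
  have hconv : ∀ (t : ℝ) (k : ℕ), 0 ≤ t → k ≤ d →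
      (1 + t) ^ (-((d : ℝ) - k)) = (((1 + t) ^ (d - k : ℕ)))⁻¹ := by
    intro t k ht hk
    have h1 : (0:ℝ) < 1 + t := by linarith
    rw [show -((d : ℝ) - k) = -(((d - k : ℕ) : ℝ)) by rw [Nat.cast_sub hk]]
    rw [Real.rpow_neg h1.le, Real.rpow_natCast]
  have hconv2 : ∀ (t : ℝ), 0 ≤ t →
      (1 + t) ^ (2 - (d : ℝ)) = (((1 + t) ^ (d - 2 : ℕ)))⁻¹ := by
    intro t ht
    have h := hconv t 2 ht (by omega)
    rw [show (2 - (d:ℝ)) = -((d:ℝ) - (2:ℕ)) by push_cast; ring]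
    exact h
  have hzn0 : znorm (0 : Vtx d) = 0 := by simp [znorm]
  have hMn0 : Mn (0 : Vtx d) = 0 := Mn_eq_zero_iff.mpr rfl
  -- real upper bound on τ
  have hq_real_up : ∀ v : Vtx d, τ v ≤ CU * (((Mn v : ℝ) + 1)⁻¹) ^ (d - 2) := by
    intro v
    by_cases hv : v = 0
    · subst hv
      rw [hτzero, hMn0]
      norm_num
      exact hCU1
    · have hb := (hτbnd v hv).2
      have hz := znorm_nonneg v
      have hMz := Mn_le_znorm v
      have h1 : (0:ℝ) < 1 + znorm v := by linarith
      have h2 : (0:ℝ) < (Mn v : ℝ) + 1 := by positivity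
      calc τ v ≤ C₀ * (1 + znorm v) ^ (2 - (d:ℝ)) := hb
        _ = C₀ * (((1 + znorm v) ^ (d - 2 : ℕ)))⁻¹ := by rw [hconv2 _ hz]
        _ ≤ CU * ((((Mn v : ℝ) + 1) ^ (d - 2 : ℕ)))⁻¹ := by
            apply mul_le_mul hC₀CU _ (inv_nonneg.mpr (pow_nonneg h1.le _)) hCU0.le
            apply inv_anti₀ (by positivity)
            exact pow_le_pow_left₀ h2.le (by linarith) _
        _ = CU * (((Mn v : ℝ) + 1)⁻¹) ^ (d - 2) := by rw [inv_pow]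
  -- real lower bound on τ
  have hq_real_low : ∀ v : Vtx d,
      (((Mn v : ℝ) + 1)⁻¹) ^ (d - 2) ≤ (s ^ (d - 2) / cm) * τ v := by
    intro v
    have hz := znorm_nonneg v
    have hMz := znorm_le_Mn v
    have h1 : (0:ℝ) < 1 + znorm v := by linarith
    have h2 : (0:ℝ) < (Mn v : ℝ) + 1 := by positivity
    have hlow : cm * (1 + znorm v) ^ (2 - (d:ℝ)) ≤ τ v := by
      by_cases hv : v = 0
      · subst hv
        rw [hτzero, hzn0, add_zero, Real.one_rpow, mul_one]
        exact hcm1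
      · calc cm * (1 + znorm v) ^ (2 - (d:ℝ)) ≤ c * (1 + znorm v) ^ (2 - (d:ℝ)) :=
            mul_le_mul_of_nonneg_right hcmc (Real.rpow_nonneg h1.le _)
          _ ≤ τ v := (hτbnd v hv).1
    have hzs : 1 + znorm v ≤ s * ((Mn v : ℝ) + 1) := by
      nlinarith [Nat.cast_nonneg (α := ℝ) (Mn v)]
    have hkey : (((Mn v : ℝ) + 1)⁻¹) ^ (d - 2) ≤
        s ^ (d - 2) * (((1 + znorm v) ^ (d - 2 : ℕ)))⁻¹ := by
      rw [inv_pow, ← one_div, ← div_eq_mul_inv,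
        div_le_div_iff₀ (by positivity) (pow_pos h1 _)]
      calc 1 * (1 + znorm v) ^ (d - 2 : ℕ) = (1 + znorm v) ^ (d - 2 : ℕ) := one_mul _
        _ ≤ (s * ((Mn v : ℝ) + 1)) ^ (d - 2 : ℕ) := pow_le_pow_left₀ h1.le hzs _
        _ = s ^ (d - 2) * ((Mn v : ℝ) + 1) ^ (d - 2) := mul_pow _ _ _
    calc (((Mn v : ℝ) + 1)⁻¹) ^ (d - 2)
        ≤ s ^ (d - 2) * (((1 + znorm v) ^ (d - 2 : ℕ)))⁻¹ := hkey
      _ = s ^ (d - 2) * (1 + znorm v) ^ (2 - (d:ℝ)) := by rw [hconv2 _ hz]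
      _ ≤ s ^ (d - 2) * (τ v / cm) := by
          apply mul_le_mul_of_nonneg_left _ (pow_nonneg hs0.le _)
          rw [le_div_iff₀ hcm0, mul_comm]
          exact hlow
      _ = (s ^ (d - 2) / cm) * τ v := by ring
  -- ENNReal versions
  have hTup : ∀ v : Vtx d, T v ≤ ENNReal.ofReal CU * (((Mn v : ℝ≥0∞) + 1)⁻¹) ^ (d - 2) := by
    intro v
    rw [enn_inv_pow_eq, ← ENNReal.ofReal_mul hCU0.le]
    exact ENNReal.ofReal_le_ofReal (hq_real_up v)
  have hTlow : ∀ v : Vtx d,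
      (((Mn v : ℝ≥0∞) + 1)⁻¹) ^ (d - 2) ≤ ENNReal.ofReal (s ^ (d - 2) / cm) * T v := by
    intro v
    rw [enn_inv_pow_eq, ← ENNReal.ofReal_mul hsdc.le]
    exact ENNReal.ofReal_le_ofReal (hq_real_low v)
  set DA : ℝ≥0∞ := ENNReal.ofReal CU * 2 ^ (d - 2) * ENNReal.ofReal (s ^ (d - 2) / cm)
    with hDA
  have hA : ∀ y : Vtx d, Mn x' ≤ 2 * Mn y → T y ≤ DA * T x' := by
    intro y hy
    calc T y ≤ ENNReal.ofReal CU * (((Mn y : ℝ≥0∞) + 1)⁻¹) ^ (d - 2) := hTup y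
      _ ≤ ENNReal.ofReal CU * (2 ^ (d - 2) * (((Mn x' : ℝ≥0∞) + 1)⁻¹) ^ (d - 2)) := by
          apply mul_le_mul_right
          calc (((Mn y : ℝ≥0∞) + 1)⁻¹) ^ (d - 2)
              ≤ (2 * ((Mn x' : ℝ≥0∞) + 1)⁻¹) ^ (d - 2) :=
                pow_le_pow_left' (q_le (by omega)) _
            _ = 2 ^ (d - 2) * (((Mn x' : ℝ≥0∞) + 1)⁻¹) ^ (d - 2) := mul_pow _ _ _
      _ ≤ ENNReal.ofReal CU * (2 ^ (d - 2) * (ENNReal.ofReal (s ^ (d - 2) / cm) * T x')) := by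
          exact mul_le_mul_right (mul_le_mul_right (hTlow x') _) _
      _ = DA * T x' := by rw [hDA]; ring
  have hB : ∀ y : Vtx d, 2 * Mn y < Mn x' → T (y - x') ≤ DA * T x' := by
    intro y hy
    have htri := Mn_tri x' y
    calc T (y - x') ≤ ENNReal.ofReal CU * (((Mn (y - x') : ℝ≥0∞) + 1)⁻¹) ^ (d - 2) := hTup _
      _ ≤ ENNReal.ofReal CU * (2 ^ (d - 2) * (((Mn x' : ℝ≥0∞) + 1)⁻¹) ^ (d - 2)) := by
          apply mul_le_mul_right
          calc (((Mn (y - x') : ℝ≥0∞) + 1)⁻¹) ^ (d - 2)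
              ≤ (2 * ((Mn x' : ℝ≥0∞) + 1)⁻¹) ^ (d - 2) :=
                pow_le_pow_left' (q_le (by omega)) _
            _ = 2 ^ (d - 2) * (((Mn x' : ℝ≥0∞) + 1)⁻¹) ^ (d - 2) := mul_pow _ _ _
      _ ≤ ENNReal.ofReal CU * (2 ^ (d - 2) * (ENNReal.ofReal (s ^ (d - 2) / cm) * T x')) := by
          exact mul_le_mul_right (mul_le_mul_right (hTlow x') _) _
      _ = DA * T x' := by rw [hDA]; ring
  -- core sums
  set Kc : ℝ≥0∞ := ((d * 2 ^ d * 2 ^ (d + 2) : ℕ) : ℝ≥0∞) with hKc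
  set mm : ℕ := min (Mn x) (Mn (x - x')) with hmm
  have hcoreA : ∑' y : Vtx d, T (y - x) * T (y - x') ≤
      (ENNReal.ofReal CU * ENNReal.ofReal CU) * (Kc * (((mm : ℝ≥0∞) + 1)⁻¹) ^ (d - 4)) := by
    calc ∑' y : Vtx d, T (y - x) * T (y - x')
        ≤ ∑' y : Vtx d, (ENNReal.ofReal CU * ENNReal.ofReal CU) *
            ((((Mn (y - x) : ℝ≥0∞) + 1)⁻¹) ^ (d - 2) *
             (((Mn (y - x') : ℝ≥0∞) + 1)⁻¹) ^ (d - 2)) := by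
          apply ENNReal.tsum_le_tsum
          intro y
          calc T (y - x) * T (y - x')
              ≤ (ENNReal.ofReal CU * (((Mn (y - x) : ℝ≥0∞) + 1)⁻¹) ^ (d - 2)) *
                (ENNReal.ofReal CU * (((Mn (y - x') : ℝ≥0∞) + 1)⁻¹) ^ (d - 2)) :=
                mul_le_mul' (hTup _) (hTup _)
            _ = (ENNReal.ofReal CU * ENNReal.ofReal CU) *
                ((((Mn (y - x) : ℝ≥0∞) + 1)⁻¹) ^ (d - 2) *
                 (((Mn (y - x') : ℝ≥0∞) + 1)⁻¹) ^ (d - 2)) := by ring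
      _ = (ENNReal.ofReal CU * ENNReal.ofReal CU) *
          ∑' y : Vtx d, ((((Mn (y - x) : ℝ≥0∞) + 1)⁻¹) ^ (d - 2) *
             (((Mn (y - x') : ℝ≥0∞) + 1)⁻¹) ^ (d - 2)) := ENNReal.tsum_mul_left
      _ ≤ (ENNReal.ofReal CU * ENNReal.ofReal CU) *
          (Kc * (((mm : ℝ≥0∞) + 1)⁻¹) ^ (d - 4)) := by
          apply mul_le_mul_right
          have hre : ∑' y : Vtx d, ((((Mn (y - x) : ℝ≥0∞) + 1)⁻¹) ^ (d - 2) *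
              (((Mn (y - x') : ℝ≥0∞) + 1)⁻¹) ^ (d - 2)) =
              ∑' u : Vtx d, ((((Mn u : ℝ≥0∞) + 1)⁻¹) ^ (d - 2) *
              (((Mn (u - (x' - x)) : ℝ≥0∞) + 1)⁻¹) ^ (d - 2)) := by
            rw [← sub_reindex x (fun u => (((Mn u : ℝ≥0∞) + 1)⁻¹) ^ (d - 2) *
              (((Mn (u - (x' - x)) : ℝ≥0∞) + 1)⁻¹) ^ (d - 2))]
            apply tsum_congr
            intro y
            have hyy : y - x - (x' - x) = y - x' := by abel
            rw [hyy]
          rw [hre]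
          calc ∑' u : Vtx d, ((((Mn u : ℝ≥0∞) + 1)⁻¹) ^ (d - 2) *
              (((Mn (u - (x' - x)) : ℝ≥0∞) + 1)⁻¹) ^ (d - 2))
              ≤ Kc * (((Mn (x' - x) : ℝ≥0∞) + 1)⁻¹) ^ (d - 4) := core_sum hd (x' - x)
            _ = Kc * (((Mn (x - x') : ℝ≥0∞) + 1)⁻¹) ^ (d - 4) := by rw [Mn_sub_rev]
            _ ≤ Kc * (((mm : ℝ≥0∞) + 1)⁻¹) ^ (d - 4) :=
                mul_le_mul_right (pow_le_pow_left' (q_anti (min_le_right _ _)) _) _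
  have hcoreB : ∑' y : Vtx d, T y * T (y - x) ≤
      (ENNReal.ofReal CU * ENNReal.ofReal CU) * (Kc * (((mm : ℝ≥0∞) + 1)⁻¹) ^ (d - 4)) := by
    calc ∑' y : Vtx d, T y * T (y - x)
        ≤ ∑' y : Vtx d, (ENNReal.ofReal CU * ENNReal.ofReal CU) *
            ((((Mn y : ℝ≥0∞) + 1)⁻¹) ^ (d - 2) *
             (((Mn (y - x) : ℝ≥0∞) + 1)⁻¹) ^ (d - 2)) := by
          apply ENNReal.tsum_le_tsum
          intro y
          calc T y * T (y - x)
              ≤ (ENNReal.ofReal CU * (((Mn y : ℝ≥0∞) + 1)⁻¹) ^ (d - 2)) *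
                (ENNReal.ofReal CU * (((Mn (y - x) : ℝ≥0∞) + 1)⁻¹) ^ (d - 2)) :=
                mul_le_mul' (hTup _) (hTup _)
            _ = (ENNReal.ofReal CU * ENNReal.ofReal CU) *
                ((((Mn y : ℝ≥0∞) + 1)⁻¹) ^ (d - 2) *
                 (((Mn (y - x) : ℝ≥0∞) + 1)⁻¹) ^ (d - 2)) := by ring
      _ = (ENNReal.ofReal CU * ENNReal.ofReal CU) *
          ∑' y : Vtx d, ((((Mn y : ℝ≥0∞) + 1)⁻¹) ^ (d - 2) *
             (((Mn (y - x) : ℝ≥0∞) + 1)⁻¹) ^ (d - 2)) := ENNReal.tsum_mul_left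
      _ ≤ (ENNReal.ofReal CU * ENNReal.ofReal CU) *
          (Kc * (((mm : ℝ≥0∞) + 1)⁻¹) ^ (d - 4)) := by
          apply mul_le_mul_right
          calc ∑' y : Vtx d, ((((Mn y : ℝ≥0∞) + 1)⁻¹) ^ (d - 2) *
              (((Mn (y - x) : ℝ≥0∞) + 1)⁻¹) ^ (d - 2))
              ≤ Kc * (((Mn x : ℝ≥0∞) + 1)⁻¹) ^ (d - 4) := core_sum hd x
            _ ≤ Kc * (((mm : ℝ≥0∞) + 1)⁻¹) ^ (d - 4) :=
                mul_le_mul_right (pow_le_pow_left' (q_anti (min_le_left _ _)) _) _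
  -- split the main sum
  set gA : Vtx d → ℝ≥0∞ := fun y =>
    if Mn x' ≤ 2 * Mn y then DA * T x' * (T (y - x) * T (y - x')) else 0 with hgA
  set gB : Vtx d → ℝ≥0∞ := fun y =>
    if ¬ (Mn x' ≤ 2 * Mn y) then DA * T x' * (T y * T (y - x)) else 0 with hgB
  have hsplit : ∀ y : Vtx d, T y * T (y - x) * T (y - x') ≤ gA y + gB y := by
    intro y
    by_cases hy : Mn x' ≤ 2 * Mn y
    · have h1 : T y * T (y - x) * T (y - x') ≤ gA y := by
        simp only [hgA, if_pos hy]
        calc T y * T (y - x) * T (y - x') = T y * (T (y - x) * T (y - x')) := by ring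
          _ ≤ (DA * T x') * (T (y - x) * T (y - x')) := mul_le_mul_left (hA y hy) _
      exact h1.trans le_self_add
    · have h1 : T y * T (y - x) * T (y - x') ≤ gB y := by
        simp only [hgB, if_pos hy]
        calc T y * T (y - x) * T (y - x') = (T y * T (y - x)) * T (y - x') := by ring
          _ ≤ (T y * T (y - x)) * (DA * T x') := mul_le_mul_right (hB y (by omega)) _
          _ = DA * T x' * (T y * T (y - x)) := by ring
      exact h1.trans le_add_self
  have hgAsum : ∑' y, gA y ≤ DA * T x' *
      ((ENNReal.ofReal CU * ENNReal.ofReal CU) * (Kc * (((mm : ℝ≥0∞) + 1)⁻¹) ^ (d - 4))) := by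
    calc ∑' y, gA y ≤ ∑' y : Vtx d, DA * T x' * (T (y - x) * T (y - x')) := by
          apply ENNReal.tsum_le_tsum
          intro y
          simp only [hgA]
          split
          · exact le_rfl
          · exact zero_le
      _ = DA * T x' * ∑' y : Vtx d, (T (y - x) * T (y - x')) := ENNReal.tsum_mul_left
      _ ≤ _ := mul_le_mul_right hcoreA _
  have hgBsum : ∑' y, gB y ≤ DA * T x' *
      ((ENNReal.ofReal CU * ENNReal.ofReal CU) * (Kc * (((mm : ℝ≥0∞) + 1)⁻¹) ^ (d - 4))) := by
    calc ∑' y, gB y ≤ ∑' y : Vtx d, DA * T x' * (T y * T (y - x)) := by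
          apply ENNReal.tsum_le_tsum
          intro y
          simp only [hgB]
          split
          · exact le_rfl
          · exact zero_le
      _ = DA * T x' * ∑' y : Vtx d, (T y * T (y - x)) := ENNReal.tsum_mul_left
      _ ≤ _ := mul_le_mul_right hcoreB _
  -- min-norm comparison
  have hzmin0 : 0 ≤ min (znorm x) (znorm (x - x')) :=
    le_min (znorm_nonneg x) (znorm_nonneg (x - x'))
  set rpw : ℝ := (1 + min (znorm x) (znorm (x - x'))) ^ (-((d : ℝ) - 4)) with hrpw
  have hrpw0 : 0 ≤ rpw := Real.rpow_nonneg (by linarith) _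
  have hminreal : (((mm : ℝ) + 1)⁻¹) ^ (d - 4) ≤ s ^ (d - 4) * rpw := by
    have h1 : 1 + min (znorm x) (znorm (x - x')) ≤ s * ((mm : ℝ) + 1) := by
      rcases le_total (Mn x) (Mn (x - x')) with h | h
      · have hmme : mm = Mn x := by rw [hmm]; exact min_eq_left h
        have hle : min (znorm x) (znorm (x - x')) ≤ znorm x := min_le_left _ _
        have h2 := znorm_le_Mn x
        rw [hmme]
        nlinarith [Nat.cast_nonneg (α := ℝ) (Mn x)]
      · have hmme : mm = Mn (x - x') := by rw [hmm]; exact min_eq_right h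
        have hle : min (znorm x) (znorm (x - x')) ≤ znorm (x - x') := min_le_right _ _
        have h2 := znorm_le_Mn (x - x')
        rw [hmme]
        nlinarith [Nat.cast_nonneg (α := ℝ) (Mn (x - x'))]
    have hco := hconv (min (znorm x) (znorm (x - x'))) 4 hzmin0 (by omega)
    rw [hrpw, show -((d:ℝ) - 4) = -((d:ℝ) - (4:ℕ)) by push_cast; ring, hco]
    rw [inv_pow, ← one_div, ← div_eq_mul_inv,
      div_le_div_iff₀ (by positivity) (pow_pos (by linarith) _)]
    calc 1 * (1 + min (znorm x) (znorm (x - x'))) ^ (d - 4 : ℕ)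
        = (1 + min (znorm x) (znorm (x - x'))) ^ (d - 4 : ℕ) := one_mul _
      _ ≤ (s * ((mm : ℝ) + 1)) ^ (d - 4 : ℕ) := pow_le_pow_left₀ (by linarith) h1 _
      _ = s ^ (d - 4) * ((mm : ℝ) + 1) ^ (d - 4) := mul_pow _ _ _
  have hminEnn : (((mm : ℝ≥0∞) + 1)⁻¹) ^ (d - 4) ≤ ENNReal.ofReal (s ^ (d - 4) * rpw) := by
    rw [enn_inv_pow_eq]
    exact ENNReal.ofReal_le_ofReal hminreal
  -- put everything together
  have hsummand : ∀ y : Vtx d, ENNReal.ofReal (τ x * τ y * τ (y - x) * τ (y - x')) =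
      T x * (T y * T (y - x) * T (y - x')) := by
    intro y
    rw [ENNReal.ofReal_mul (mul_nonneg (mul_nonneg (h0 x) (h0 y)) (h0 (y - x))),
      ENNReal.ofReal_mul (mul_nonneg (h0 x) (h0 y)),
      ENNReal.ofReal_mul (h0 x)]
    simp only [hT]
    ring
  have hDAval : DA = ENNReal.ofReal DAr := by
    rw [hDA, hDAr, ENNReal.ofReal_mul (mul_nonneg hCU0.le (by positivity)),
      ENNReal.ofReal_mul hCU0.le]
    congr 1
    rw [ENNReal.ofReal_pow (by norm_num : (0:ℝ) ≤ 2), ENNReal.ofReal_ofNat]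
  have hKcval : Kc = ENNReal.ofReal Kcr := by
    rw [hKc, hKcr, ENNReal.ofReal_natCast]
  have hQ1 : (2 : ℝ≥0∞) * DA * (ENNReal.ofReal CU * ENNReal.ofReal CU) * Kc =
      ENNReal.ofReal Er := by
    have h1 : Er = ((2 * DAr) * (CU * CU)) * Kcr := by rw [hEr]; ring
    rw [h1, ENNReal.ofReal_mul (by positivity), ENNReal.ofReal_mul (by positivity),
      ENNReal.ofReal_mul (by norm_num : (0:ℝ) ≤ 2),
      ENNReal.ofReal_mul hCU0.le]
    rw [hDAval, hKcval, ENNReal.ofReal_ofNat]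
  calc ∑' y : Vtx d, ENNReal.ofReal (τ x * τ y * τ (y - x) * τ (y - x'))
      = ∑' y : Vtx d, T x * (T y * T (y - x) * T (y - x')) := tsum_congr hsummand
    _ = T x * ∑' y : Vtx d, (T y * T (y - x) * T (y - x')) := ENNReal.tsum_mul_left
    _ ≤ T x * ∑' y : Vtx d, (gA y + gB y) :=
        mul_le_mul_right (ENNReal.tsum_le_tsum hsplit) _
    _ = T x * ((∑' y, gA y) + (∑' y, gB y)) := by rw [ENNReal.tsum_add]
    _ ≤ T x * ((DA * T x' *
          ((ENNReal.ofReal CU * ENNReal.ofReal CU) * (Kc * (((mm : ℝ≥0∞) + 1)⁻¹) ^ (d - 4)))) +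
        (DA * T x' *
          ((ENNReal.ofReal CU * ENNReal.ofReal CU) * (Kc * (((mm : ℝ≥0∞) + 1)⁻¹) ^ (d - 4))))) :=
        mul_le_mul_right (add_le_add hgAsum hgBsum) _
    _ = (2 * DA * (ENNReal.ofReal CU * ENNReal.ofReal CU) * Kc) *
          (T x * (T x' * (((mm : ℝ≥0∞) + 1)⁻¹) ^ (d - 4))) := by ring
    _ ≤ (2 * DA * (ENNReal.ofReal CU * ENNReal.ofReal CU) * Kc) *
          (T x * (T x' * ENNReal.ofReal (s ^ (d - 4) * rpw))) :=
        mul_le_mul_right (mul_le_mul_right (mul_le_mul_right hminEnn _) _) _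
    _ = ENNReal.ofReal (Er * s ^ (d - 4) * τ x * τ x' * rpw) := by
        rw [hQ1]
        simp only [hT]
        rw [← ENNReal.ofReal_mul (h0 x'), ← ENNReal.ofReal_mul (h0 x),
          ← ENNReal.ofReal_mul hEr0.le]
        congr 1
        ring
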